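/- The set of rational points of the elliptic curve E : y² = x³ + 1 over ℚ consists of exactly six points: the point at infinity together with the affine points (0, 1), (0, −1), (−1, 0), (2, 3), and (2, −3). -/

import Mathlib

/-- Eisenstein integers: `re + im * ω` with `ω² + ω + 1 = 0`. -/
@[ext]
structure Ei : Type where
  re : ℤ
  im : ℤ
deriving DecidableEq

namespace Ei

instance : Zero Ei := ⟨⟨0, 0⟩⟩
instance : One Ei := ⟨⟨1, 0⟩⟩
instance : Add Ei := ⟨fun a b => ⟨a.re + b.re, a.im + b.im⟩⟩
instance : Neg Ei := ⟨fun a => ⟨-a.re, -a.im⟩⟩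
instance : Mul Ei :=
  ⟨fun a b => ⟨a.re * b.re - a.im * b.im, a.re * b.im + a.im * b.re - a.im * b.im⟩⟩

@[simp] lemma zero_re : (0 : Ei).re = 0 := rfl
@[simp] lemma zero_im : (0 : Ei).im = 0 := rfl
@[simp] lemma one_re : (1 : Ei).re = 1 := rfl
@[simp] lemma one_im : (1 : Ei).im = 0 := rfl
@[simp] lemma add_re (a b : Ei) : (a + b).re = a.re + b.re := rfl
@[simp] lemma add_im (a b : Ei) : (a + b).im = a.im + b.im := rfl
@[simp] lemma neg_re (a : Ei) : (-a).re = -a.re := rfl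
@[simp] lemma neg_im (a : Ei) : (-a).im = -a.im := rfl
@[simp] lemma mul_re (a b : Ei) : (a * b).re = a.re * b.re - a.im * b.im := rfl
@[simp] lemma mul_im (a b : Ei) :
    (a * b).im = a.re * b.im + a.im * b.re - a.im * b.im := rfl

instance commRing : CommRing Ei where
  add_assoc a b c := by ext <;> simp <;> ring
  zero_add a := by ext <;> simp
  add_zero a := by ext <;> simp
  add_comm a b := by ext <;> simp <;> ring
  neg_add_cancel a := by ext <;> simp
  mul_assoc a b c := by ext <;> simp <;> ring
  one_mul a := by ext <;> simp
  mul_one a := by ext <;> simp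
  left_distrib a b c := by ext <;> simp <;> ring
  right_distrib a b c := by ext <;> simp <;> ring
  mul_comm a b := by ext <;> simp <;> ring
  zero_mul a := by ext <;> simp
  mul_zero a := by ext <;> simp
  nsmul n a := ⟨n * a.re, n * a.im⟩
  nsmul_zero a := by show (⟨((0:ℕ):ℤ) * a.re, ((0:ℕ):ℤ) * a.im⟩ : Ei) = 0; ext <;> simp
  nsmul_succ n a := by
    show (⟨((n+1:ℕ):ℤ) * a.re, ((n+1:ℕ):ℤ) * a.im⟩ : Ei) = ⟨(n:ℤ) * a.re, (n:ℤ) * a.im⟩ + a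
    ext <;> simp <;> ring
  zsmul n a := ⟨n * a.re, n * a.im⟩
  zsmul_zero' a := by show (⟨(0:ℤ) * a.re, (0:ℤ) * a.im⟩ : Ei) = 0; ext <;> simp
  zsmul_succ' n a := by
    show (⟨((n.succ:ℕ):ℤ) * a.re, ((n.succ:ℕ):ℤ) * a.im⟩ : Ei) = ⟨((n:ℕ):ℤ) * a.re, ((n:ℕ):ℤ) * a.im⟩ + a
    ext <;> simp <;> ring
  zsmul_neg' n a := by
    show (⟨(Int.negSucc n) * a.re, (Int.negSucc n) * a.im⟩ : Ei) = -(⟨((n.succ:ℕ):ℤ) * a.re, ((n.succ:ℕ):ℤ) * a.im⟩ : Ei)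
    ext <;> simp [Int.negSucc_eq] <;> ring

instance : Nontrivial Ei := ⟨⟨0, 1, by decide⟩⟩

@[simp] lemma sub_re (a b : Ei) : (a - b).re = a.re - b.re := rfl
@[simp] lemma sub_im (a b : Ei) : (a - b).im = a.im - b.im := rfl

@[simp] lemma natCast_re (n : ℕ) : (n : Ei).re = n := by
  induction n with
  | zero => simp
  | succ k ih => push_cast [ih]; simp [ih]

@[simp] lemma natCast_im (n : ℕ) : (n : Ei).im = 0 := by
  induction n with
  | zero => simp
  | succ k ih => push_cast [ih]; simp [ih]

@[simp] lemma intCast_re (n : ℤ) : (n : Ei).re = n := by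
  cases n with
  | ofNat k => simpa using natCast_re k
  | negSucc k => simp [Int.cast_negSucc, Int.negSucc_eq]

@[simp] lemma intCast_im (n : ℤ) : (n : Ei).im = 0 := by
  cases n with
  | ofNat k => simpa using natCast_im k
  | negSucc k => simp [Int.cast_negSucc]

@[simp] lemma mk_re (a b : ℤ) : (Ei.mk a b).re = a := rfl
@[simp] lemma mk_im (a b : ℤ) : (Ei.mk a b).im = b := rfl

@[simp] lemma ofNat_re (n : ℕ) [n.AtLeastTwo] :
    (no_index (OfNat.ofNat n) : Ei).re = OfNat.ofNat n := natCast_re n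
@[simp] lemma ofNat_im (n : ℕ) [n.AtLeastTwo] :
    (no_index (OfNat.ofNat n) : Ei).im = 0 := natCast_im n

/-- The norm. -/
def norm (a : Ei) : ℤ := a.re ^ 2 - a.re * a.im + a.im ^ 2

lemma norm_mul (a b : Ei) : norm (a * b) = norm a * norm b := by
  simp [norm]; ring

lemma norm_nonneg (a : Ei) : 0 ≤ norm a := by
  have : 4 * norm a = (2 * a.re - a.im) ^ 2 + 3 * a.im ^ 2 := by simp [norm]; ring
  nlinarith [sq_nonneg (2 * a.re - a.im), sq_nonneg a.im]

lemma norm_eq_zero_iff {a : Ei} : norm a = 0 ↔ a = 0 := by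
  constructor
  · intro h
    have h4 : (2 * a.re - a.im) ^ 2 + 3 * a.im ^ 2 = 0 := by simp [norm] at h ⊢; nlinarith
    have h1 : a.im = 0 := by nlinarith [sq_nonneg (2 * a.re - a.im), sq_nonneg a.im]
    have h2 : a.re = 0 := by nlinarith [sq_nonneg a.re]
    ext <;> simp [h1, h2]
  · rintro rfl; simp [norm]

lemma norm_pos {a : Ei} (h : a ≠ 0) : 0 < norm a :=
  lt_of_le_of_ne (norm_nonneg a) (fun hc => h (norm_eq_zero_iff.mp hc.symm))

/-- Conjugation. -/
def conj (a : Ei) : Ei := ⟨a.re - a.im, -a.im⟩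

@[simp] lemma conj_re (a : Ei) : (conj a).re = a.re - a.im := rfl
@[simp] lemma conj_im (a : Ei) : (conj a).im = -a.im := rfl

lemma mul_conj (a : Ei) : a * conj a = (norm a : Ei) := by
  ext <;> simp only [mul_re, mul_im, conj_re, conj_im, intCast_re, intCast_im, norm] <;> ring

instance : NoZeroDivisors Ei where
  eq_zero_or_eq_zero_of_mul_eq_zero := by
    intro a b h
    have h3 : norm a * norm b = 0 := by rw [← norm_mul, h]; simp [norm]
    rcases mul_eq_zero.mp h3 with h4 | h4
    · exact Or.inl (norm_eq_zero_iff.mp h4)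
    · exact Or.inr (norm_eq_zero_iff.mp h4)

instance : IsDomain Ei := NoZeroDivisors.to_isDomain _

/-- Rounded division of integers: `nearest x n` is an integer `q` with `|x - n*q| ≤ n/2`. -/
def nearest (x n : ℤ) : ℤ := (2 * x + n) / (2 * n)

lemma nearest_spec {x n : ℤ} (hn : 0 < n) : 2 * |x - n * nearest x n| ≤ n := by
  have h2n : 0 < 2 * n := by omega
  set q : ℤ := nearest x n with hqdef
  have h : 2 * n * q + (2 * x + n) % (2 * n) = 2 * x + n := Int.mul_ediv_add_emod (2 * x + n) (2 * n)
  have h1 := Int.emod_nonneg (2 * x + n) (by omega : (2 * n) ≠ 0)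
  have h2 := Int.emod_lt_of_pos (2 * x + n) h2n
  have key : 2 * (x - n * q) = (2 * x + n) % (2 * n) - n := by linear_combination -h
  have habs : |2 * (x - n * q)| ≤ n := by rw [key, abs_le]; omega
  calc 2 * |x - n * q| = |2 * (x - n * q)| := by
        rw [abs_mul]; norm_num
    _ ≤ n := habs

instance : Div Ei :=
  ⟨fun a b => ⟨nearest (a * conj b).re (norm b), nearest (a * conj b).im (norm b)⟩⟩

lemma div_def (a b : Ei) :
    a / b = ⟨nearest (a * conj b).re (norm b), nearest (a * conj b).im (norm b)⟩ := rfl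

instance : Mod Ei := ⟨fun a b => a - b * (a / b)⟩

lemma mod_def (a b : Ei) : a % b = a - b * (a / b) := rfl

lemma norm_mod_lt (a : Ei) {b : Ei} (hb : b ≠ 0) : norm (a % b) < norm b := by
  have hn : 0 < norm b := norm_pos hb
  set n := norm b with hnb
  set q : Ei := a / b with hq
  have hre : 2 * |(a * conj b).re - n * q.re| ≤ n := nearest_spec hn
  have him : 2 * |(a * conj b).im - n * q.im| ≤ n := nearest_spec hn
  set er : ℤ := (a * conj b).re - n * q.re with her
  set ei : ℤ := (a * conj b).im - n * q.im with hei
  have key : norm (a % b) * n = er ^ 2 - er * ei + ei ^ 2 := by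
    have h1 : (a % b) * conj b = a * conj b - q * (b * conj b) := by
      rw [mod_def]; ring
    have h2 : (a % b) * conj b = (⟨er, ei⟩ : Ei) := by
      rw [h1, mul_conj, ← hnb]; ext <;> simp [her, hei] <;> ring
    have h3 : norm ((a % b) * conj b) = er ^ 2 - er * ei + ei ^ 2 := by
      rw [h2]; simp [norm]
    have h4 : norm (conj b) = n := by simp [norm, hnb]; ring
    rw [← h4, ← norm_mul, h3]
  have h5 : 4 * er ^ 2 ≤ n ^ 2 := by
    have := abs_nonneg (er); nlinarith [sq_abs er]
  have h6 : 4 * ei ^ 2 ≤ n ^ 2 := by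
    have := abs_nonneg (ei); nlinarith [sq_abs ei]
  have h7 : norm (a % b) * n < n * n := by nlinarith [sq_nonneg (er - ei), sq_nonneg (er + ei)]
  exact lt_of_mul_lt_mul_right (by linarith [h7]) (le_of_lt hn)

lemma natAbs_norm_mod_lt (a : Ei) {b : Ei} (hb : b ≠ 0) :
    (norm (a % b)).natAbs < (norm b).natAbs := by
  have h1 := norm_mod_lt a hb
  have h2 := norm_nonneg (a % b)
  have h3 := norm_nonneg b
  omega

instance euclideanDomain : EuclideanDomain Ei :=
  { Ei.commRing, (inferInstance : Nontrivial Ei) with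
    quotient := (· / ·)
    remainder := (· % ·)
    quotient_zero := fun a => by
      show a / 0 = 0
      rw [div_def]
      simp only [norm, zero_re, zero_im, nearest]
      norm_num
      rfl
    quotient_mul_add_remainder_eq := fun a b => by
      show b * (a / b) + (a - b * (a / b)) = a
      ring
    r := fun x y => (norm x).natAbs < (norm y).natAbs
    r_wellFounded := (measure fun x : Ei => (norm x).natAbs).wf
    remainder_lt := fun a b hb => natAbs_norm_mod_lt a hb
    mul_left_not_lt := fun a b hb => by
      rw [not_lt, norm_mul, Int.natAbs_mul]
      have : 1 ≤ (norm b).natAbs := by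
        have := norm_pos hb; omega
      exact Nat.le_mul_of_pos_right _ (by omega) }

end Ei

namespace Ei

/-- ω as an element. -/
def om : Ei := ⟨0, 1⟩

lemma norm_dvd_norm {a b : Ei} (h : a ∣ b) : norm a ∣ norm b := by
  obtain ⟨c, rfl⟩ := h; rw [norm_mul]; exact dvd_mul_right _ _

lemma isUnit_of_norm_eq_one {u : Ei} (h : norm u = 1) : IsUnit u :=
  IsUnit.of_mul_eq_one (a := u) (conj u) (by rw [mul_conj, h]; norm_num)

lemma norm_eq_one_of_isUnit {u : Ei} (h : IsUnit u) : norm u = 1 := by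
  obtain ⟨v, hv⟩ := h.exists_right_inv
  have h1 : norm u * norm v = 1 := by rw [← norm_mul, hv]; simp [norm]
  have h2 := norm_nonneg u
  have h3 := norm_nonneg v
  have hd : norm u ∣ 1 := ⟨norm v, h1.symm⟩
  have h5 := Int.le_of_dvd (by norm_num) hd
  nlinarith

lemma int_sq_eq_one {x : ℤ} (h : x ^ 2 = 1) : x = 1 ∨ x = -1 := by
  have : x * x = 1 := by nlinarith
  exact mul_self_eq_one_iff.mp this

lemma unit_cases {u : Ei} (h : IsUnit u) :
    u = 1 ∨ u = -1 ∨ u = om ∨ u = -om ∨ u = ⟨-1, -1⟩ ∨ u = ⟨1, 1⟩ := by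
  have h1 : u.re ^ 2 - u.re * u.im + u.im ^ 2 = 1 := norm_eq_one_of_isUnit h
  have h4 : (2 * u.re - u.im) ^ 2 + 3 * u.im ^ 2 = 4 := by linear_combination 4 * h1
  have him : u.im = -1 ∨ u.im = 0 ∨ u.im = 1 := by
    have h5 : u.im ^ 2 ≤ 1 := by nlinarith [sq_nonneg (2 * u.re - u.im)]
    have h6 : -1 ≤ u.im ∧ u.im ≤ 1 := abs_le.mp (by nlinarith [sq_abs u.im, abs_nonneg u.im])
    omega
  have hre : ∀ s : ℤ, u.im = s → (2 * u.re - s) ^ 2 + 3 * s ^ 2 = 4 := by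
    intro s hs; rw [← hs]; exact h4
  rcases him with hs | hs | hs
  · have h7 := hre _ hs
    have h8 : (2 * u.re + 1) ^ 2 = 1 := by linarith
    rcases int_sq_eq_one h8 with h9 | h9
    · refine Or.inr (Or.inr (Or.inr (Or.inl ?_)))
      ext <;> simp [om] <;> omega
    · refine Or.inr (Or.inr (Or.inr (Or.inr (Or.inl ?_))))
      ext <;> simp <;> omega
  · have h7 := hre _ hs
    have h8 : u.re ^ 2 = 1 := by nlinarith
    rcases int_sq_eq_one h8 with h9 | h9
    · exact Or.inl (by ext <;> simp <;> omega)
    · exact Or.inr (Or.inl (by ext <;> simp <;> omega))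
  · have h7 := hre _ hs
    have h8 : (2 * u.re - 1) ^ 2 = 1 := by linarith
    rcases int_sq_eq_one h8 with h9 | h9
    · refine Or.inr (Or.inr (Or.inr (Or.inr (Or.inr ?_))))
      ext <;> simp <;> omega
    · refine Or.inr (Or.inr (Or.inl ?_))
      ext <;> simp [om] <;> omega

lemma pow3_re (a : Ei) : (a ^ 3).re = a.re ^ 3 - 3 * a.re * a.im ^ 2 + a.im ^ 3 := by
  have h : a ^ 3 = a * a * a := by ring
  rw [h]; simp; ring

lemma pow3_im (a : Ei) : (a ^ 3).im = 3 * a.re ^ 2 * a.im - 3 * a.re * a.im ^ 2 := by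
  have h : a ^ 3 = a * a * a := by ring
  rw [h]; simp; ring

end Ei

section IntHelpers

lemma int_cube_inj {a b : ℤ} (h : a ^ 3 = b ^ 3) : a = b :=
  (Odd.strictMono_pow (R := ℤ) (by decide)).injective h

lemma odd_of_cube_dvd_contra {d t : ℤ} (hd : 0 < d) (h4 : d ∣ 4) (ht : ¬ (2 ∣ t))
    (hdt : d ∣ t ^ 3) : d = 1 := by
  have h2 : ¬ (2 ∣ t ^ 3) := by
    intro h3
    exact ht (Int.prime_two.dvd_of_dvd_pow h3)
  have hle : d ≤ 4 := Int.le_of_dvd (by norm_num) h4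
  interval_cases d
  · rfl
  · exact absurd (dvd_trans (by norm_num) hdt) h2
  · exact absurd h4 (by decide)
  · exact absurd (dvd_trans (by norm_num) hdt) h2

end IntHelpers

section KeyLemma

lemma not_dvd_both {p q d : ℤ} (hco : IsCoprime p q) (hd : 2 ≤ d) : ¬(d ∣ p ∧ d ∣ q) := by
  rintro ⟨hp, hq⟩
  obtain ⟨u, v, huv⟩ := hco
  have h1 : d ∣ 1 := by rw [← huv]; exact dvd_add (hp.mul_left u) (hq.mul_left v)
  have := Int.le_of_dvd one_pos h1
  omega

lemma not_two_dvd_t {p q t : ℤ} (h : p^2 + 3*q^2 = t^3) (hpq : ¬(2 ∣ p ∧ 2 ∣ q)) :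
    ¬ (2:ℤ) ∣ t := by
  rintro ⟨s, rfl⟩
  rcases Int.even_or_odd p with ⟨a, hp⟩ | ⟨a, hp⟩ <;>
    rcases Int.even_or_odd q with ⟨b, hq⟩ | ⟨b, hq⟩
  · exact hpq ⟨⟨a, by omega⟩, ⟨b, by omega⟩⟩
  · have e : 4*(a*a) + 12*(b*(b+1)) + 3 = 8*(s*s*s) := by
      subst hp hq; linear_combination h
    obtain ⟨cb, hcb⟩ := Int.even_mul_succ_self b
    rw [hcb] at e
    generalize a*a = A at e
    generalize s*s*s = S at e
    omega
  · have e : 4*(a*(a+1)) + 12*(b*b) + 1 = 8*(s*s*s) := by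
      subst hp hq; linear_combination h
    obtain ⟨ca, hca⟩ := Int.even_mul_succ_self a
    rw [hca] at e
    generalize b*b = B at e
    generalize s*s*s = S at e
    omega
  · have e : 4*(a*(a+1)) + 12*(b*(b+1)) + 4 = 8*(s*s*s) := by
      subst hp hq; linear_combination h
    obtain ⟨ca, hca⟩ := Int.even_mul_succ_self a
    obtain ⟨cb, hcb⟩ := Int.even_mul_succ_self b
    rw [hca, hcb] at e
    generalize s*s*s = S at e
    omega

lemma not_three_dvd_t {p q t : ℤ} (h : p^2 + 3*q^2 = t^3) (hpq : ¬(3 ∣ p ∧ 3 ∣ q)) :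
    ¬ (3:ℤ) ∣ t := by
  rintro ⟨s, rfl⟩
  have h3 : (3:ℤ) ∣ p^2 := ⟨9*s^3 - q^2, by linear_combination h⟩
  have hp : (3:ℤ) ∣ p := Int.prime_three.dvd_of_dvd_pow h3
  obtain ⟨p', rfl⟩ := hp
  have e : 3*(q^2 - (9*s^3 - 3*p'^2)) = 0 := by linear_combination h
  have h4 : (3:ℤ) ∣ q^2 := ⟨3*s^3 - p'^2, by linarith⟩
  exact hpq ⟨⟨p', rfl⟩, Int.prime_three.dvd_of_dvd_pow h4⟩

theorem ei_descent_key {p q t : ℤ} (hco : IsCoprime p q) (h : p^2 + 3*q^2 = t^3) :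
    ∃ m n : ℤ, p = m^3 - 9*m*n^2 ∧ q = 3*m^2*n - 3*n^3 := by
  have h2pq := not_dvd_both hco (by norm_num : (2:ℤ) ≤ 2)
  have h3pq := not_dvd_both hco (by norm_num : (2:ℤ) ≤ 3)
  have ht2 : ¬ (2:ℤ) ∣ t := not_two_dvd_t h h2pq
  have ht3 : ¬ (3:ℤ) ∣ t := not_three_dvd_t h h3pq
  have ht0 : t ≠ 0 := by rintro rfl; exact ht2 ⟨0, rfl⟩
  set α : Ei := ⟨p + q, 2*q⟩ with hα
  have hNα : Ei.norm α = t^3 := by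
    simp only [Ei.norm, hα]
    linear_combination h
  have hprod : α * Ei.conj α = (t : Ei)^3 := by
    rw [Ei.mul_conj, hNα]; push_cast; ring
  have hα0 : α ≠ 0 := by
    intro h0
    rw [h0] at hNα
    have h1 : t^3 = 0 := by simpa [Ei.norm] using hNα.symm
    exact ht0 (pow_eq_zero_iff (by norm_num)|>.mp h1)
  have hcop : IsCoprime α (Ei.conj α) := by
    apply isCoprime_of_irreducible_dvd
    · rintro ⟨h1, -⟩; exact hα0 h1
    · intro z hz hzα hzconj
      have hzp : Prime z := irreducible_iff_prime.mp hz
      have hN3 : Ei.norm z ∣ t^3 := hNα ▸ Ei.norm_dvd_norm hzα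
      have hNz1 : Ei.norm z ≠ 1 := fun h1 => hzp.not_unit (Ei.isUnit_of_norm_eq_one h1)
      have hNz0 : 0 < Ei.norm z := Ei.norm_pos hzp.ne_zero
      have hz2 : ¬ z ∣ (2 : Ei) := by
        intro hd
        have h2cast : (2:Ei) = ((2:ℤ):Ei) := by norm_num
        have h4 : Ei.norm z ∣ 4 := by
          have h5 := Ei.norm_dvd_norm hd
          rw [h2cast] at h5
          simpa [Ei.norm] using h5
        exact hNz1 (odd_of_cube_dvd_contra hNz0 h4 ht2 hN3)
      have hsum : α + Ei.conj α = (2 : Ei) * (p : Ei) := by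
        ext <;> simp [hα, Ei.conj] <;> ring
      have hdiff : α - Ei.conj α = (2 : Ei) * ((q : Ei) * ⟨1, 2⟩) := by
        ext <;> simp [hα, Ei.conj] <;> ring
      have hzP : z ∣ (p : Ei) := by
        have h6 : z ∣ (2 : Ei) * (p : Ei) := hsum ▸ dvd_add hzα hzconj
        rcases hzp.2.2 _ _ h6 with h7 | h7
        · exact absurd h7 hz2
        · exact h7
      have hzQ : z ∣ (q : Ei) := by
        have h6 : z ∣ (2 : Ei) * ((q : Ei) * ⟨1,2⟩) := hdiff ▸ dvd_sub hzα hzconj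
        rcases hzp.2.2 _ _ h6 with h7 | h7
        · exact absurd h7 hz2
        rcases hzp.2.2 _ _ h7 with h8 | h8
        · exact h8
        · exfalso
          have h9 : Ei.norm z ∣ 3 := by
            have := Ei.norm_dvd_norm h8
            simpa [Ei.norm] using this
          have h11 : Ei.norm z = 1 ∨ Ei.norm z = 3 := by
            have h10 : Ei.norm z ≤ 3 := Int.le_of_dvd (by norm_num) h9
            interval_cases (Ei.norm z)
            · exact Or.inl rfl
            · exact absurd h9 (by decide)
            · exact Or.inr rfl
          rcases h11 with h11 | h11
          · exact hNz1 h11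
          · exact ht3 (Int.prime_three.dvd_of_dvd_pow (n := 3) (h11 ▸ hN3))
      obtain ⟨u, v, huv⟩ := hco
      have h11 : z ∣ (1 : Ei) := by
        have hcast : ((u:ℤ):Ei) * (p:Ei) + ((v:ℤ):Ei)*((q:ℤ):Ei) = 1 := by
          have := congrArg (fun n : ℤ => (n : Ei)) huv
          push_cast at this
          simpa using this
        rw [← hcast]
        exact dvd_add (hzP.mul_left _) (hzQ.mul_left _)
      exact hzp.not_unit (isUnit_of_dvd_one h11)
  obtain ⟨β, hassoc⟩ := exists_associated_pow_of_mul_eq_pow' hcop hprod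
  obtain ⟨u, hu⟩ := hassoc
  have hNβ : Ei.norm β = t := by
    apply int_cube_inj
    have h3 : Ei.norm (β^3) = (Ei.norm β)^3 := by
      rw [show β^3 = β*β*β from by ring, Ei.norm_mul, Ei.norm_mul]; ring
    have h1 : (Ei.norm β)^3 * Ei.norm (u : Ei) = t^3 := by
      rw [← h3, ← Ei.norm_mul, hu, hNα]
    rw [Ei.norm_eq_one_of_isUnit u.isUnit, mul_one] at h1
    exact h1
  have hβnotboth : ¬(Even β.re ∧ Even β.im) := by
    rintro ⟨⟨a, ha⟩, ⟨b, hb⟩⟩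
    have h1 : (2:ℤ) ∣ Ei.norm β := ⟨2*a^2 - 2*a*b + 2*b^2, by simp [Ei.norm, ha, hb]; ring⟩
    rw [hNβ] at h1
    exact ht2 h1
  obtain ⟨γ, hγcube, hγim, hγre⟩ :
      ∃ γ : Ei, γ^3 = β^3 ∧ Even γ.im ∧ Odd γ.re := by
    rcases Int.even_or_odd β.re with hre | hre <;> rcases Int.even_or_odd β.im with him | him
    · exact absurd ⟨hre, him⟩ hβnotboth
    · -- re even, im odd: γ = ω² * β, coords ⟨β.im - β.re, -β.re⟩
      refine ⟨(⟨-1,-1⟩ : Ei) * β, ?_, ?_, ?_⟩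
      · rw [mul_pow, show ((⟨-1,-1⟩ : Ei))^3 = 1 from by decide, one_mul]
      · obtain ⟨a, ha⟩ := hre
        exact ⟨-a, by simp [ha]; try ring⟩
      · obtain ⟨a, ha⟩ := hre
        obtain ⟨b, hb⟩ := him
        exact ⟨b - a, by simp [ha, hb]; try ring⟩
    · exact ⟨β, rfl, him, hre⟩
    · -- both odd: γ = ω * β, coords ⟨-β.im, β.re - β.im⟩
      refine ⟨Ei.om * β, ?_, ?_, ?_⟩
      · rw [mul_pow, show (Ei.om)^3 = 1 from by decide, one_mul]
      · obtain ⟨a, ha⟩ := hre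
        obtain ⟨b, hb⟩ := him
        exact ⟨a - b, by simp [Ei.om, ha, hb]; try ring⟩
      · obtain ⟨b, hb⟩ := him
        exact ⟨-b - 1, by simp [Ei.om, hb]; try ring⟩
  have hαu : α = γ^3 * (u : Ei) := by rw [hγcube, hu]
  obtain ⟨n, hn⟩ := hγim
  obtain ⟨k, hk⟩ := hγre
  have hBre := Ei.pow3_re γ
  have hBim := Ei.pow3_im γ
  rcases Ei.unit_cases u.isUnit with hc | hc | hc | hc | hc | hc
  -- u = 1
  · rw [hc, mul_one] at hαu
    have e1 : p + q = (γ^3).re := congrArg Ei.re hαu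
    have e2 : 2*q = (γ^3).im := congrArg Ei.im hαu
    rw [hBre] at e1
    rw [hBim] at e2
    refine ⟨γ.re - n, n, ?_, ?_⟩
    · have hq2 : 2*q = 2*(3*(γ.re - n)^2*n - 3*n^3) := by
        rw [e2, hn]; ring
      have hqv : q = 3*(γ.re - n)^2*n - 3*n^3 := by linarith
      rw [hn] at e1
      linear_combination e1 - hqv
    · have hq2 : 2*q = 2*(3*(γ.re - n)^2*n - 3*n^3) := by
        rw [e2, hn]; ring
      linarith
  -- u = -1
  · rw [hc] at hαu
    have e1 : p + q = -(γ^3).re := by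
      have := congrArg Ei.re hαu; simpa using this
    have e2 : 2*q = -(γ^3).im := by
      have := congrArg Ei.im hαu; simpa using this
    rw [hBre] at e1
    rw [hBim] at e2
    refine ⟨-(γ.re - n), -n, ?_, ?_⟩
    · have hq2 : 2*q = 2*(3*(-(γ.re - n))^2*(-n) - 3*(-n)^3) := by
        rw [e2, hn]; ring
      have hqv : q = 3*(-(γ.re - n))^2*(-n) - 3*(-n)^3 := by linarith
      rw [hn] at e1
      linear_combination e1 - hqv
    · have hq2 : 2*q = 2*(3*(-(γ.re - n))^2*(-n) - 3*(-n)^3) := by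
        rw [e2, hn]; ring
      linarith
  -- u = ω : contradiction
  · exfalso
    rw [hc] at hαu
    have e2 : 2*q = (γ^3).re - (γ^3).im := by
      have := congrArg Ei.im hαu
      simpa [Ei.om] using this
    rw [hBre, hBim, hk, hn] at e2
    have e3 : 2*q = 2*(4*k^3 + 6*k^2 + 3*k - 12*n*k^2 - 12*n*k - 3*n + 4*n^3) + 1 := by
      linear_combination e2
    omega
  -- u = -ω : contradiction
  · exfalso
    rw [hc] at hαu
    have e2 : 2*q = -((γ^3).re - (γ^3).im) := by
      have := congrArg Ei.im hαu
      simpa [Ei.om] using this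
    rw [hBre, hBim, hk, hn] at e2
    have e3 : 2*q = -(2*(4*k^3 + 6*k^2 + 3*k - 12*n*k^2 - 12*n*k - 3*n + 4*n^3) + 1) := by
      linear_combination e2
    omega
  -- u = ω² = ⟨-1,-1⟩ : contradiction
  · exfalso
    rw [hc] at hαu
    have e2 : 2*q = -(γ^3).re := by
      have := congrArg Ei.im hαu
      simpa using this
    rw [hBre, hk, hn] at e2
    have e3 : 2*q = -(2*(4*k^3 + 6*k^2 + 3*k - 12*k*n^2 - 6*n^2 + 4*n^3) + 1) := by
      linear_combination e2
    omega
  -- u = -ω² = ⟨1,1⟩ : contradiction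
  · exfalso
    rw [hc] at hαu
    have e2 : 2*q = (γ^3).re := by
      have := congrArg Ei.im hαu
      simpa using this
    rw [hBre, hk, hn] at e2
    have e3 : 2*q = 2*(4*k^3 + 6*k^2 + 3*k - 12*k*n^2 - 6*n^2 + 4*n^3) + 1 := by
      linear_combination e2
    omega

end KeyLemma

section Euler

lemma cube_le_cube {a b : ℤ} (h : a ^ 3 ≤ b ^ 3) : a ≤ b :=
  ((Odd.strictMono_pow (R := ℤ) (by decide)).le_iff_le).mp h

lemma int_assoc_cube {a d : ℤ} (h : Associated (d^3) a) : ∃ e : ℤ, a = e^3 := by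
  rcases Int.associated_iff.mp h with h1 | h1
  · exact ⟨d, h1.symm⟩
  · exact ⟨-d, by linear_combination h1⟩

lemma coprime_cube_split {a b c : ℤ} (hco : IsCoprime a b) (h : a * b = c^3) :
    ∃ e f : ℤ, a = e^3 ∧ b = f^3 := by
  obtain ⟨d1, h1⟩ := exists_associated_pow_of_mul_eq_pow' hco h
  obtain ⟨e, he⟩ := int_assoc_cube h1
  obtain ⟨d2, h2⟩ := exists_associated_pow_of_mul_eq_pow' hco.symm (by rw [mul_comm]; exact h)
  obtain ⟨f, hf⟩ := int_assoc_cube h2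
  exact ⟨e, f, he, hf⟩

lemma odd_coprime_sub_add {x y : ℤ} (h : IsCoprime x y) (hodd : Odd (x - y)) :
    IsCoprime (x - y) (x + y) := by
  rw [Int.isCoprime_iff_gcd_eq_one]
  by_contra hne
  set d : ℕ := Int.gcd (x - y) (x + y) with hd
  have hd1 : (d:ℤ) ∣ (x - y) := Int.gcd_dvd_left _ _
  have hd2 : (d:ℤ) ∣ (x + y) := Int.gcd_dvd_right _ _
  have hdodd : ¬ (2:ℤ) ∣ (d:ℤ) := by
    intro h2
    obtain ⟨w, hw⟩ := h2.trans hd1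
    exact (Int.not_odd_iff_even.mpr ⟨w, by omega⟩) hodd
  have h2x : (d:ℤ) ∣ 2*x := by
    have h3 := dvd_add hd1 hd2
    convert! h3 using 1; ring
  have h2y : (d:ℤ) ∣ 2*y := by
    have h3 := dvd_sub hd2 hd1
    convert! h3 using 1; ring
  have hco2 : IsCoprime ((d:ℤ)) 2 :=
    ((Int.prime_two.coprime_iff_not_dvd).mpr hdodd).symm
  have hx : (d:ℤ) ∣ x := hco2.dvd_of_dvd_mul_left h2x
  have hy : (d:ℤ) ∣ y := hco2.dvd_of_dvd_mul_left h2y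
  obtain ⟨u, v, huv⟩ := h
  have h1 : (d:ℤ) ∣ 1 := by rw [← huv]; exact dvd_add (hx.mul_left u) (hy.mul_left v)
  have h4 := Int.le_of_dvd one_pos h1
  have h5 : (d:ℤ) ≠ 0 := by rintro h6; rw [h6] at h1; norm_num at h1
  omega

lemma both_odd_even {m n : ℤ} (hm : Odd m) (hn : Odd n) :
    (2:ℤ) ∣ (m^3 - 9*m*n^2) ∧ (2:ℤ) ∣ (3*m^2*n - 3*n^3) := by
  obtain ⟨x, hx⟩ := hm
  obtain ⟨y, hy⟩ := hn
  subst hx hy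
  exact ⟨⟨4*x^3+6*x^2-6*x-36*x*y^2-36*x*y-18*y^2-18*y-4, by ring⟩,
         ⟨12*x^2*y+6*x^2+12*x*y+6*x-12*y^3-18*y^2-6*y, by ring⟩⟩

lemma int_one_le_sq {q : ℤ} (h : q ≠ 0) : 1 ≤ q^2 := by
  rcases lt_or_gt_of_ne h with h1 | h1 <;> nlinarith

theorem euler_aux (N : ℕ) : ∀ a b c : ℤ, c.natAbs ≤ N → IsCoprime a b →
    a^3 + b^3 = 2*c^3 → a = b ∨ c = 0 := by
  induction N with
  | zero =>
    intro a b c hc _ _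
    right; omega
  | succ N ih =>
    intro a b c hc hco h
    by_cases hc0 : c = 0
    · exact Or.inr hc0
    by_cases hab : a = b
    · exact Or.inl hab
    exfalso
    -- a, b both odd
    have hoddab : Odd a ∧ Odd b := by
      rcases Int.even_or_odd a with ⟨x, hx⟩ | hx <;> rcases Int.even_or_odd b with ⟨y, hy⟩ | hy
      · exfalso
        exact not_dvd_both hco (by norm_num : (2:ℤ) ≤ 2) ⟨⟨x, by omega⟩, ⟨y, by omega⟩⟩
      · exfalso
        obtain ⟨y, hy⟩ := hy
        have e2 : a^3 + b^3 = 2*c^3 := h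
        rw [hx, hy] at e2
        have e3 : 2*(4*x^3 + 4*y^3 + 6*y^2 + 3*y) + 1 = 2*c^3 := by linear_combination e2
        generalize 4*x^3 + 4*y^3 + 6*y^2 + 3*y = A at e3
        generalize c^3 = C at e3
        omega
      · exfalso
        obtain ⟨x2, hx2⟩ := hx
        rw [hx2, hy] at h
        have e3 : 2*(4*y^3 + 4*x2^3 + 6*x2^2 + 3*x2) + 1 = 2*c^3 := by linear_combination h
        generalize 4*y^3 + 4*x2^3 + 6*x2^2 + 3*x2 = A at e3
        generalize c^3 = C at e3
        omega
      · exact ⟨hx, hy⟩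
    obtain ⟨⟨ka, hka⟩, ⟨kb, hkb⟩⟩ := hoddab
    -- p, q with a = p + q, b = p - q
    obtain ⟨p, q, hpa, hqb⟩ : ∃ p q : ℤ, a = p + q ∧ b = p - q :=
      ⟨ka + kb + 1, ka - kb, by omega, by omega⟩
    subst hpa hqb
    have key : p * (p^2 + 3*q^2) = c^3 := by
      have h2 : 2*(p*(p^2 + 3*q^2)) = 2*c^3 := by linear_combination h
      linarith
    have hpq : IsCoprime p q := by
      obtain ⟨u, v, huv⟩ := hco
      exact ⟨u + v, u - v, by linear_combination huv⟩
    have hq0 : q ≠ 0 := fun h0 => hab (by rw [h0]; ring)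
    have hp0 : p ≠ 0 := by
      rintro rfl
      rw [zero_mul] at key
      exact hc0 (pow_eq_zero_iff (by norm_num) |>.mp key.symm)
    have h2pq := not_dvd_both hpq (by norm_num : (2:ℤ) ≤ 2)
    have h3pq := not_dvd_both hpq (by norm_num : (2:ℤ) ≤ 3)
    by_cases h3p : (3:ℤ) ∣ p
    · -- Case B : 3 ∣ p
      obtain ⟨r, rfl⟩ := h3p
      have hq3 : ¬ (3:ℤ) ∣ q := fun hq3 => h3pq ⟨⟨r, by ring⟩, hq3⟩
      have hr0 : r ≠ 0 := by rintro rfl; exact hp0 (by ring)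
      have hqr : IsCoprime q r :=
        (hpq.symm).of_isCoprime_of_dvd_right (dvd_mul_left r 3)
      have h3X : ¬ (3:ℤ) ∣ (q^2 + 3*r^2) := by
        rintro ⟨w, hw⟩
        exact hq3 (Int.prime_three.dvd_of_dvd_pow (n := 2) ⟨w - r^2, by linarith⟩)
      have hco9X : IsCoprime (9*r) (q^2 + 3*r^2) := by
        have hc3 : IsCoprime (3:ℤ) (q^2 + 3*r^2) :=
          (Int.prime_three.coprime_iff_not_dvd).mpr h3X
        have hc9 : IsCoprime (9:ℤ) (q^2 + 3*r^2) := by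
          rw [show (9:ℤ) = 3^2 by norm_num]
          exact hc3.pow_left
        have hcr : IsCoprime r (q^2 + 3*r^2) := by
          have h1 : IsCoprime r (q^2) := (hqr.symm).pow_right
          have h2 := h1.add_mul_left_right (3*r)
          convert! h2 using 1; ring
        exact hc9.mul_left hcr
      have key2 : (9*r) * (q^2 + 3*r^2) = c^3 := by linear_combination key
      obtain ⟨S, T, hS, hT⟩ := coprime_cube_split hco9X key2
      obtain ⟨m, n, hm, hn⟩ := ei_descent_key hqr hT
      have hmn : IsCoprime m n := by
        obtain ⟨u, v, huv⟩ := hqr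
        rw [hm, hn] at huv
        exact ⟨u*(m^2 - 9*n^2), v*(3*m^2 - 3*n^2), by linear_combination huv⟩
      have hpar : ¬(Odd m ∧ Odd n) := by
        rintro ⟨h1, h2⟩
        have h3 := both_odd_even h1 h2
        exact not_dvd_both hqr (by norm_num : (2:ℤ) ≤ 2) ⟨hm ▸ h3.1, hn ▸ h3.2⟩
      have hnboth : ¬(Even m ∧ Even n) := by
        rintro ⟨⟨x, hx⟩, ⟨y, hy⟩⟩
        exact not_dvd_both hmn (by norm_num : (2:ℤ) ≤ 2) ⟨⟨x, by omega⟩, ⟨y, by omega⟩⟩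
      have hoddmn : Odd (m - n) := by
        rcases Int.even_or_odd m with hx | hx <;> rcases Int.even_or_odd n with hy | hy
        · exact absurd ⟨hx, hy⟩ hnboth
        · obtain ⟨x, hx⟩ := hx; obtain ⟨y, hy⟩ := hy; exact ⟨x - y - 1, by omega⟩
        · obtain ⟨x, hx⟩ := hx; obtain ⟨y, hy⟩ := hy; exact ⟨x - y, by omega⟩
        · exact absurd ⟨hx, hy⟩ hpar
      -- S = 3u with u³ = n (m-n) (m+n)
      have h3S : (3:ℤ) ∣ S := by
        apply Int.prime_three.dvd_of_dvd_pow (n := 3)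
        exact ⟨3*r, by linarith [hS]⟩
      obtain ⟨u, rfl⟩ := h3S
      have hu3 : n * ((m - n) * (m + n)) = u^3 := by
        have h27 : 27*(n * ((m - n) * (m + n))) = 27*(u^3) := by
          rw [hn] at hS
          linear_combination hS
        linarith
      have hn1 : IsCoprime n ((m - n) * (m + n)) := by
        have hnm : IsCoprime n m := hmn.symm
        have ha1 : IsCoprime n (m - n) := by
          have := hnm.add_mul_left_right (-1)
          convert! this using 1; ring
        have ha2 : IsCoprime n (m + n) := by
          have := hnm.add_mul_left_right 1
          convert! this using 1; ring
        exact ha1.mul_right ha2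
      obtain ⟨g, w, hg, hw⟩ := coprime_cube_split hn1 hu3
      have hc2 : IsCoprime (m - n) (m + n) := odd_coprime_sub_add hmn hoddmn
      obtain ⟨e, f, he, hf⟩ := coprime_cube_split hc2 hw
      -- descent equation : f³ + (-e)³ = 2 g³
      have hdesc : f^3 + (-e)^3 = 2*g^3 := by
        linear_combination -hf + he + 2*hg
      have hef : IsCoprime f (-e) := by
        have h1 : IsCoprime e f :=
          (hc2.of_isCoprime_of_dvd_left (he ▸ dvd_pow_self e (by norm_num)))
            |>.of_isCoprime_of_dvd_right (hf ▸ dvd_pow_self f (by norm_num))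
        exact h1.symm.neg_right
      -- nonvanishing facts
      have hg0 : g ≠ 0 := by
        rintro rfl
        have hn0 : n = 0 := by simpa using hg
        exact hr0 (by simp [hn, hn0])
      have he0 : e ≠ 0 := by
        rintro rfl
        have h1 : m = n := by have h2 := he; simp at h2; linarith
        exact hr0 (by rw [hn, h1]; ring)
      have hf0 : f ≠ 0 := by
        rintro rfl
        have h1 : m = -n := by have h2 := hf; simp at h2; linarith
        exact hr0 (by rw [hn, h1]; ring)
      have hT1 : 1 ≤ T := by
        have h1 : 1 ≤ T^3 := by
          rw [← hT]
          nlinarith [int_one_le_sq hq0, sq_nonneg r]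
        have := cube_le_cube (show (1:ℤ)^3 ≤ T^3 by linarith)
        linarith
      -- c = 3 * g * e * f * T
      have hueq : u = g * e * f := by
        apply int_cube_inj
        linear_combination -hu3 + ((m-n)*(m+n))*hg + (g^3*(m+n))*he + (g^3*e^3)*hf
      have hceq : c = 3*u*T := by
        apply int_cube_inj
        linear_combination -key2 + (q^2+3*r^2)*hS + 27*u^3*hT
      have hsize : g.natAbs < c.natAbs := by
        have h1 : c.natAbs = 3 * g.natAbs * e.natAbs * f.natAbs * T.natAbs := by
          rw [hceq, hueq, show (3:ℤ)*(g*e*f)*T = 3*g*e*f*T by ring]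
          simp only [Int.natAbs_mul]
          norm_num
        have h2 : 0 < e.natAbs := Int.natAbs_pos.mpr he0
        have h3 : 0 < f.natAbs := Int.natAbs_pos.mpr hf0
        have h4 : 0 < g.natAbs := Int.natAbs_pos.mpr hg0
        have h5 : 0 < T.natAbs := Int.natAbs_pos.mpr (by omega)
        have h7 : 3*g.natAbs ≤ 3*g.natAbs*e.natAbs := Nat.le_mul_of_pos_right _ h2
        have h8 : 3*g.natAbs*e.natAbs ≤ 3*g.natAbs*e.natAbs*f.natAbs :=
          Nat.le_mul_of_pos_right _ h3
        have h9 : 3*g.natAbs*e.natAbs*f.natAbs ≤ 3*g.natAbs*e.natAbs*f.natAbs*T.natAbs :=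
          Nat.le_mul_of_pos_right _ h5
        linarith
      have hrec := ih f (-e) g (by omega) hef hdesc
      rcases hrec with h1 | h1
      · -- f = -e  →  m = 0  →  q = 0
        have h1c : f^3 = (-e)^3 := by rw [h1]
        have h2 : 2*m = 0 := by linear_combination hf + he + h1c
        have h3 : m = 0 := by omega
        exact hq0 (by rw [hm, h3]; ring)
      · exact hg0 h1
    · -- Case A : ¬ 3 ∣ p
      have hcp : IsCoprime p (p^2 + 3*q^2) := by
        have h3co : IsCoprime p 3 :=
          ((Int.prime_three.coprime_iff_not_dvd).mpr h3p).symm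
        have h1 : IsCoprime p (3*q^2) := h3co.mul_right (hpq.pow_right)
        have h2 := h1.add_mul_left_right p
        convert! h2 using 1; ring
      obtain ⟨S, T, hS, hT⟩ := coprime_cube_split hcp key
      obtain ⟨m, n, hm, hn⟩ := ei_descent_key hpq hT
      have hmn : IsCoprime m n := by
        obtain ⟨u, v, huv⟩ := hpq
        rw [hm, hn] at huv
        exact ⟨u*(m^2 - 9*n^2), v*(3*m^2 - 3*n^2), by linear_combination huv⟩
      have h3m : ¬ (3:ℤ) ∣ m := by
        intro ⟨w, hw⟩
        exact h3p ⟨w*m^2 - 3*m*n^2, by rw [hm, hw]; ring⟩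
      have hpar : ¬(Odd m ∧ Odd n) := by
        rintro ⟨h1, h2⟩
        have h3 := both_odd_even h1 h2
        exact h2pq ⟨hm ▸ h3.1, hn ▸ h3.2⟩
      have hnboth : ¬(Even m ∧ Even n) := by
        rintro ⟨⟨x, hx⟩, ⟨y, hy⟩⟩
        exact not_dvd_both hmn (by norm_num : (2:ℤ) ≤ 2) ⟨⟨x, by omega⟩, ⟨y, by omega⟩⟩
      have hoddmn : Odd (m - 3*n) := by
        rcases Int.even_or_odd m with hx | hx <;> rcases Int.even_or_odd n with hy | hy
        · exact absurd ⟨hx, hy⟩ hnboth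
        · obtain ⟨x, hx⟩ := hx; obtain ⟨y, hy⟩ := hy; exact ⟨x - 3*y - 2, by omega⟩
        · obtain ⟨x, hx⟩ := hx; obtain ⟨y, hy⟩ := hy; exact ⟨x - 3*y, by omega⟩
        · exact absurd ⟨hx, hy⟩ hpar
      have hm3n : IsCoprime m (3*n) := by
        have h3co : IsCoprime m 3 :=
          ((Int.prime_three.coprime_iff_not_dvd).mpr h3m).symm
        exact h3co.mul_right hmn
      have hMprod : m * ((m - 3*n) * (m + 3*n)) = S^3 := by
        rw [← hS, hm]; ring
      have ha1 : IsCoprime m (m - 3*n) := by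
        have := (hm3n.neg_right).add_mul_left_right 1
        convert! this using 1; ring
      have ha2 : IsCoprime m (m + 3*n) := by
        have := hm3n.add_mul_left_right 1
        convert! this using 1; ring
      have hc2 : IsCoprime (m - 3*n) (m + 3*n) := by
        have := odd_coprime_sub_add hm3n hoddmn
        exact this
      obtain ⟨g, w, hg, hw⟩ := coprime_cube_split (ha1.mul_right ha2) hMprod
      obtain ⟨e, f, he, hf⟩ := coprime_cube_split hc2 hw
      have hdesc : e^3 + f^3 = 2*g^3 := by
        linear_combination -he - hf + 2*hg
      have hef : IsCoprime e f :=
        (hc2.of_isCoprime_of_dvd_left (he ▸ dvd_pow_self e (by norm_num)))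
          |>.of_isCoprime_of_dvd_right (hf ▸ dvd_pow_self f (by norm_num))
      have hg0 : g ≠ 0 := by
        rintro rfl
        have hm0 : m = 0 := by simpa using hg
        exact hp0 (by simp [hm, hm0])
      have he0 : e ≠ 0 := by
        rintro rfl
        have h1 : m = 3*n := by have h2 := he; simp at h2; linarith
        exact h3m ⟨n, h1⟩
      have hf0 : f ≠ 0 := by
        rintro rfl
        have h1 : m = -(3*n) := by have h2 := hf; simp at h2; linarith
        exact h3m ⟨-n, by omega⟩
      have hT2 : 2 ≤ T := by
        have h1 : 4 ≤ T^3 := by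
          rw [← hT]
          nlinarith [int_one_le_sq hq0, int_one_le_sq hp0]
        by_contra h2
        have h3 := (Odd.strictMono_pow (R := ℤ) (show Odd 3 by decide)).monotone
          (show T ≤ 1 by omega)
        have h4 : T^3 ≤ 1 := by simpa using h3
        linarith
      have hSeq : S = g * e * f := by
        apply int_cube_inj
        linear_combination -hMprod + ((m-3*n)*(m+3*n))*hg + (g^3*(m+3*n))*he + (g^3*e^3)*hf
      have hceq : c = S*T := by
        apply int_cube_inj
        linear_combination -key + (p^2+3*q^2)*hS + S^3*hT
      have hsize : g.natAbs < c.natAbs := by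
        have h1 : c.natAbs = g.natAbs * e.natAbs * f.natAbs * T.natAbs := by
          rw [hceq, hSeq, show (g*e*f)*T = g*e*f*T by ring]
          simp only [Int.natAbs_mul]
        have h2 : 0 < e.natAbs := Int.natAbs_pos.mpr he0
        have h3 : 0 < f.natAbs := Int.natAbs_pos.mpr hf0
        have h4 : 0 < g.natAbs := Int.natAbs_pos.mpr hg0
        have h5 : 2 ≤ T.natAbs := by omega
        have h7 : g.natAbs ≤ g.natAbs*e.natAbs := Nat.le_mul_of_pos_right _ h2
        have h8 : g.natAbs*e.natAbs ≤ g.natAbs*e.natAbs*f.natAbs :=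
          Nat.le_mul_of_pos_right _ h3
        have h9 : g.natAbs*e.natAbs*f.natAbs*2 ≤ g.natAbs*e.natAbs*f.natAbs*T.natAbs :=
          Nat.mul_le_mul_left _ h5
        have h10 : 0 < g.natAbs*e.natAbs*f.natAbs := by positivity
        linarith
      have hrec := ih e f g (by omega) hef hdesc
      rcases hrec with h1 | h1
      · have h1c : e^3 = f^3 := by rw [h1]
        have h2 : 6*n = 0 := by linear_combination -he + hf - h1c
        have h3 : n = 0 := by omega
        exact hq0 (by rw [hn, h3]; ring)
      · exact hg0 h1

end Euler
section RationalPoints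

theorem euler_int {a b c : ℤ} (hco : IsCoprime a b) (h : a^3 + b^3 = 2*c^3) :
    a = b ∨ c = 0 :=
  euler_aux c.natAbs a b c le_rfl hco h

lemma rat_cube_one {a : ℚ} (h : a^3 = 1) : a = 1 := by
  have h1 : (a - 1) * (a^2 + a + 1) = 0 := by linear_combination h
  rcases mul_eq_zero.mp h1 with h2 | h2
  · linarith
  · nlinarith [sq_nonneg (2*a + 1)]

lemma rat_rep (a : ℚ) : ∃ p r : ℤ, 1 ≤ r ∧ IsCoprime p r ∧ (p:ℚ) = a * (r:ℚ) := by
  refine ⟨a.num, (a.den : ℤ), ?_, ?_, ?_⟩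
  · have h0 := a.pos
    omega
  · rw [Int.isCoprime_iff_gcd_eq_one]
    simpa [Int.gcd] using a.reduced
  · have hd : ((a.den : ℕ) : ℚ) ≠ 0 := by
      have h0 := a.pos
      positivity
    have h1 := Rat.num_div_den a
    rw [div_eq_iff hd] at h1
    push_cast
    exact h1

theorem rat_cube_two {a b : ℚ} (h : a^3 + b^3 = 2) : a = 1 ∧ b = 1 := by
  obtain ⟨p, r, hr1, hpr, har⟩ := rat_rep a
  obtain ⟨q, s, hs1, hqs, hbs⟩ := rat_rep b
  have hrQ : (r : ℚ) ≠ 0 := by positivity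
  have hsQ : (s : ℚ) ≠ 0 := by positivity
  have h1 : ((p^3*s^3 + q^3*r^3 : ℤ) : ℚ) = ((2*r^3*s^3 : ℤ) : ℚ) := by
    push_cast
    rw [har, hbs]
    linear_combination (r:ℚ)^3 * (s:ℚ)^3 * h
  have h2 : p^3*s^3 + q^3*r^3 = 2*r^3*s^3 := by exact_mod_cast h1
  -- r = s
  have hrs : r = s := by
    have hd1 : r^3 ∣ p^3 * s^3 := ⟨2*s^3 - q^3, by linarith⟩
    have hd2 : s^3 ∣ q^3 * r^3 := ⟨2*r^3 - p^3, by linarith⟩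
    have hc1 : IsCoprime (r^3) (p^3) := (hpr.symm).pow
    have hc2 : IsCoprime (s^3) (q^3) := (hqs.symm).pow
    have hrs1 : r ∣ s := (Int.pow_dvd_pow_iff (by norm_num : 3 ≠ 0)).mp
      (hc1.dvd_of_dvd_mul_left hd1)
    have hrs2 : s ∣ r := (Int.pow_dvd_pow_iff (by norm_num : 3 ≠ 0)).mp
      (hc2.dvd_of_dvd_mul_left hd2)
    exact Int.dvd_antisymm (by omega) (by omega) hrs1 hrs2
  subst hrs
  have hr0 : r ≠ 0 := by omega
  have h3 : p^3 + q^3 = 2*r^3 := by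
    have h4 : r^3 * (p^3 + q^3) = r^3 * (2*r^3) := by linear_combination h2
    exact mul_left_cancel₀ (pow_ne_zero 3 hr0) h4
  -- coprime p q
  have hpq : IsCoprime p q := by
    rw [Int.isCoprime_iff_gcd_eq_one]
    have hdp : (Int.gcd p q : ℤ) ∣ p := Int.gcd_dvd_left _ _
    have hdq : (Int.gcd p q : ℤ) ∣ q := Int.gcd_dvd_right _ _
    have hd3 : (Int.gcd p q : ℤ)^3 ∣ 2*r^3 := by
      rw [← h3]
      exact dvd_add (pow_dvd_pow_of_dvd hdp 3) (pow_dvd_pow_of_dvd hdq 3)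
    have hdr : IsCoprime ((Int.gcd p q : ℤ)) r := hpr.of_isCoprime_of_dvd_left hdp
    have hd2' : ((Int.gcd p q : ℤ))^3 ∣ 2 := (hdr.pow).dvd_of_dvd_mul_right
      (by rwa [mul_comm] at hd3)
    have hd0 : Int.gcd p q ≠ 0 := by
      rintro h0
      rw [h0] at hdp hdq
      simp at hdp hdq
      rw [hdp, hdq] at h3
      simp at h3
      omega
    have hdle : ((Int.gcd p q : ℤ))^3 ≤ 2 := Int.le_of_dvd (by norm_num) hd2'
    have hd1' : (1:ℤ) ≤ (Int.gcd p q : ℤ) := by omega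
    have hlt : (Int.gcd p q : ℤ) < 2 := by nlinarith [hdle, hd1', sq_nonneg ((Int.gcd p q : ℤ))]
    omega
  rcases euler_int hpq h3 with h4 | h4
  · -- p = q hence a = b
    have hab : a = b := by
      have h5 : a * (r:ℚ) = b * (r:ℚ) := by rw [← har, ← hbs, h4]
      exact mul_right_cancel₀ hrQ h5
    subst hab
    have ha3 : a^3 = 1 := by linarith
    have := rat_cube_one ha3
    exact ⟨this, this⟩
  · exact absurd h4 hr0

/-- Classification of rational points on y² = x³ + 1. -/
theorem mordell_one {x y : ℚ} (h : y^2 = x^3 + 1) :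
    (x = 0 ∧ y = 1) ∨ (x = 0 ∧ y = -1) ∨ (x = -1 ∧ y = 0) ∨
    (x = 2 ∧ y = 3) ∨ (x = 2 ∧ y = -3) := by
  by_cases hx : x = 0
  · subst hx
    have h1 : (y - 1) * (y + 1) = 0 := by linear_combination h
    rcases mul_eq_zero.mp h1 with h2 | h2
    · exact Or.inl ⟨rfl, by linarith⟩
    · exact Or.inr (Or.inl ⟨rfl, by linarith⟩)
  have hx2 : x^2 ≠ 0 := pow_ne_zero 2 hx
  have hx3 : x^3 ≠ 0 := pow_ne_zero 3 hx
  set X : ℚ := (x^3 + 4)/x^2 with hX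
  set Y : ℚ := y*(x^3 - 8)/x^3 with hY
  have hXY : Y^2 = X^3 - 27 := by
    rw [hX, hY]
    field_simp
    linear_combination (x^3-8)^2 * h
  have hX0 : X ≠ 0 := by
    intro h0
    rw [h0] at hXY
    nlinarith [sq_nonneg Y]
  have h3X : (3:ℚ)*X ≠ 0 := by simp [hX0]
  have hAB : ((9+Y)/(3*X))^3 + ((9-Y)/(3*X))^3 = 2 := by
    field_simp
    linear_combination 54*hXY
  obtain ⟨hA1, hB1⟩ := rat_cube_two hAB
  have hY0 : Y = 0 := by
    have h5 : (9+Y)/(3*X) = (9-Y)/(3*X) := by rw [hA1, hB1]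
    field_simp at h5
    linarith
  have h6 : y*(x^3 - 8) = 0 := by
    rw [hY] at hY0
    field_simp at hY0
    linear_combination hY0
  rcases mul_eq_zero.mp h6 with h7 | h7
  · -- y = 0, x³ = -1
    have h8 : x^3 = -1 := by rw [h7] at h; linarith
    have h9 : (x + 1) * (x^2 - x + 1) = 0 := by linear_combination h8
    rcases mul_eq_zero.mp h9 with h10 | h10
    · exact Or.inr (Or.inr (Or.inl ⟨by linarith, h7⟩))
    · exfalso; nlinarith [sq_nonneg (2*x - 1)]
  · -- x³ = 8
    have h8 : x^3 = 8 := by linarith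
    have h9 : (x - 2) * (x^2 + 2*x + 4) = 0 := by linear_combination h8
    rcases mul_eq_zero.mp h9 with h10 | h10
    · have hx2' : x = 2 := by linarith
      subst hx2'
      have h11 : (y - 3) * (y + 3) = 0 := by linear_combination h
      rcases mul_eq_zero.mp h11 with h12 | h12
      · exact Or.inr (Or.inr (Or.inr (Or.inl ⟨rfl, by linarith⟩)))
      · exact Or.inr (Or.inr (Or.inr (Or.inr ⟨rfl, by linarith⟩)))
    · exfalso; nlinarith [sq_nonneg (x + 1)]

end RationalPoints

/-- The elliptic curve `y² = x³ + 1` over `ℚ` in Weierstrass form. -/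
def W₁ : WeierstrassCurve.Affine ℚ := { a₁ := 0, a₂ := 0, a₃ := 0, a₄ := 0, a₆ := 1 }

namespace X036Helpers

open WeierstrassCurve.Affine

lemma ns_aux {x y : ℚ} (heq : y^2 = x^3 + 1) (hor : (0:ℚ) ≠ 3*x^2 ∨ y ≠ -y) :
    W₁.Nonsingular x y := by
  rw [WeierstrassCurve.Affine.nonsingular_iff, WeierstrassCurve.Affine.equation_iff]
  constructor
  · show y^2 + W₁.a₁*x*y + W₁.a₃*y = x^3 + W₁.a₂*x^2 + W₁.a₄*x + W₁.a₆
    simp only [W₁]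
    linear_combination heq
  · simpa [W₁] using hor

lemma eq_of_ns {x y : ℚ} (h : W₁.Nonsingular x y) : y^2 = x^3 + 1 := by
  have h1 := ((WeierstrassCurve.Affine.nonsingular_iff (W := W₁) x y).mp h).1
  rw [WeierstrassCurve.Affine.equation_iff] at h1
  simp only [W₁] at h1
  linear_combination h1

lemma h01 : W₁.Nonsingular 0 1 := ns_aux (by norm_num) (Or.inr (by norm_num))
lemma h02 : W₁.Nonsingular 0 (-1) := ns_aux (by norm_num) (Or.inr (by norm_num))
lemma h03 : W₁.Nonsingular (-1) 0 := ns_aux (by norm_num) (Or.inl (by norm_num))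
lemma h04 : W₁.Nonsingular 2 3 := ns_aux (by norm_num) (Or.inr (by norm_num))
lemma h05 : W₁.Nonsingular 2 (-3) := ns_aux (by norm_num) (Or.inr (by norm_num))

lemma some_ne_some {x1 y1 x2 y2 : ℚ} {H1 : W₁.Nonsingular x1 y1} {H2 : W₁.Nonsingular x2 y2}
    (hne : x1 ≠ x2 ∨ y1 ≠ y2) : Point.some _ _ H1 ≠ Point.some _ _ H2 := by
  intro heq
  injection heq with h1 h2
  tauto

lemma hclass (P : W₁.Point) : P = 0 ∨ ∃ (x y : ℚ) (h : W₁.Nonsingular x y),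
    P = WeierstrassCurve.Affine.Point.some x y h ∧
      (x, y) ∈ ({(0, 1), (0, -1), (-1, 0), (2, 3), (2, -3)} : Set (ℚ × ℚ)) := by
  cases P with
  | zero => exact Or.inl rfl
  | @some x y h =>
    right
    refine ⟨x, y, h, rfl, ?_⟩
    rcases mordell_one (eq_of_ns h) with ⟨rfl, rfl⟩ | ⟨rfl, rfl⟩ | ⟨rfl, rfl⟩ |
      ⟨rfl, rfl⟩ | ⟨rfl, rfl⟩ <;> simp

end X036Helpers

/-- The set of rational points of the elliptic curve `y² = x³ + 1` over `ℚ` consists of exactly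
six points: the point at infinity together with the affine points `(0, 1)`, `(0, -1)`, `(-1, 0)`,
`(2, 3)` and `(2, -3)`. -/
theorem rational_points_of_X0_36 :
    Nat.card W₁.Point = 6 ∧
    (∀ P : W₁.Point, P = 0 ∨ ∃ (x y : ℚ) (h : W₁.Nonsingular x y),
      P = WeierstrassCurve.Affine.Point.some x y h ∧
        (x, y) ∈ ({(0, 1), (0, -1), (-1, 0), (2, 3), (2, -3)} : Set (ℚ × ℚ))) ∧
    (∀ q ∈ ({(0, 1), (0, -1), (-1, 0), (2, 3), (2, -3)} : Set (ℚ × ℚ)),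
      W₁.Nonsingular q.1 q.2) := by
  open X036Helpers WeierstrassCurve.Affine in
  refine ⟨?_, hclass, ?_⟩
  · -- cardinality
    have huniv : (Set.univ : Set W₁.Point) =
        {0, Point.some _ _ h01, Point.some _ _ h02, Point.some _ _ h03,
          Point.some _ _ h04, Point.some _ _ h05} := by
      ext P
      simp only [Set.mem_univ, true_iff]
      rcases hclass P with rfl | ⟨x, y, hxy, rfl, hmem⟩
      · simp
      · simp only [Set.mem_insert_iff, Set.mem_singleton_iff, Prod.mk.injEq] at hmem ⊢
        rcases hmem with ⟨rfl, rfl⟩ | ⟨rfl, rfl⟩ | ⟨rfl, rfl⟩ | ⟨rfl, rfl⟩ | ⟨rfl, rfl⟩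
        · exact Or.inr (Or.inl rfl)
        · exact Or.inr (Or.inr (Or.inl rfl))
        · exact Or.inr (Or.inr (Or.inr (Or.inl rfl)))
        · exact Or.inr (Or.inr (Or.inr (Or.inr (Or.inl rfl))))
        · exact Or.inr (Or.inr (Or.inr (Or.inr (Or.inr rfl))))
    have hzs : ∀ {x y : ℚ} (H : W₁.Nonsingular x y), (0 : W₁.Point) ≠ Point.some _ _ H :=
      fun H => (Point.some_ne_zero H).symm
    rw [← Set.ncard_univ, huniv]
    rw [Set.ncard_insert_of_notMem
      (by simp only [Set.mem_insert_iff, Set.mem_singleton_iff]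
          push_neg
          exact ⟨hzs _, hzs _, hzs _, hzs _, hzs _⟩)
      ((((Set.finite_singleton _).insert _).insert _).insert _ |>.insert _)]
    rw [Set.ncard_insert_of_notMem
      (by simp only [Set.mem_insert_iff, Set.mem_singleton_iff]
          push_neg
          exact ⟨some_ne_some (by norm_num), some_ne_some (by norm_num),
            some_ne_some (by norm_num), some_ne_some (by norm_num)⟩)
      ((((Set.finite_singleton _).insert _).insert _).insert _)]
    rw [Set.ncard_insert_of_notMem
      (by simp only [Set.mem_insert_iff, Set.mem_singleton_iff]
          push_neg
          exact ⟨some_ne_some (by norm_num), some_ne_some (by norm_num),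
            some_ne_some (by norm_num)⟩)
      (((Set.finite_singleton _).insert _).insert _)]
    rw [Set.ncard_insert_of_notMem
      (by simp only [Set.mem_insert_iff, Set.mem_singleton_iff]
          push_neg
          exact ⟨some_ne_some (by norm_num), some_ne_some (by norm_num)⟩)
      ((Set.finite_singleton _).insert _)]
    rw [Set.ncard_insert_of_notMem
      (by simp only [Set.mem_singleton_iff]
          exact some_ne_some (by norm_num))
      (Set.finite_singleton _)]
    rw [Set.ncard_singleton]
  · -- nonsingularity of the five points
    intro q hq
    simp only [Set.mem_insert_iff, Set.mem_singleton_iff] at hq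
    rcases hq with rfl | rfl | rfl | rfl | rfl
    · exact h01
    · exact h02
    · exact h03
    · exact h04
    · exact h05
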